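/- Let A be a group and M an amorphic locally compact A-module, that is, M has a compact open A-submodule Ω such that Ω is profinite as a module (inverse limit of finite modules) and M/Ω is a locally finite discrete module (every element generates a finite submodule). Then every closed A-submodule N of M is amorphic: N ∩ Ω is profinite and N/(N ∩ Ω) is discrete locally finite. -/

import Mathlib

open Filter Topology Pointwise

/-- let a group `A` act on a locally compact abelian group `M` by topological
automorphisms, and suppose `M` is amorphic: it has a compact open invariant subgroup `Ω`
that is profinite as a module (open invariant submodules form a basis at `0`) and such that
`M/Ω` is locally finite as a module (every element lies in an invariant subgroup covered by
finitely many cosets of `Ω`). Then every closed invariant subgroup `N` is amorphic: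
`N ∩ Ω` is profinite (relatively open invariant submodules form a basis at `0`) and
`N/(N ∩ Ω)` is discrete locally finite. -/
theorem stmt16 {A : Type*} [Group A] {M : Type*} [AddCommGroup M] [TopologicalSpace M]
    [IsTopologicalAddGroup M] [LocallyCompactSpace M]
    (φ : A → M ≃+ M) (hφc : ∀ a, Continuous (φ a)) (hφc' : ∀ a, Continuous (φ a).symm)
    (hφm : ∀ a b : A, ∀ x : M, φ (a * b) x = φ a (φ b x))
    (Ω : AddSubgroup M) (hΩo : IsOpen (Ω : Set M)) (hΩc : IsCompact (Ω : Set M))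
    (hΩinv : ∀ a : A, ∀ x ∈ Ω, φ a x ∈ Ω)
    (hprof : ∀ U ∈ 𝓝 (0 : M), ∃ V : AddSubgroup M, V ≤ Ω ∧ IsOpen (V : Set M) ∧
      (V : Set M) ⊆ U ∧ ∀ a : A, ∀ x ∈ V, φ a x ∈ V)
    (hlf : ∀ x : M, ∃ L : AddSubgroup M, Ω ≤ L ∧ x ∈ L ∧
      (∀ a : A, ∀ y ∈ L, φ a y ∈ L) ∧ ∃ F : Finset M, (L : Set M) ⊆ ↑F + (Ω : Set M))
    (N : AddSubgroup M) (hNcl : IsClosed (N : Set M))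
    (hNinv : ∀ a : A, ∀ x ∈ N, φ a x ∈ N) :
    IsCompact ((N ⊓ Ω : AddSubgroup M) : Set M) ∧
    (∀ U ∈ 𝓝 (0 : M), ∃ V : AddSubgroup M, V ≤ N ⊓ Ω ∧ (V : Set M) ⊆ U ∧
      (∀ a : A, ∀ x ∈ V, φ a x ∈ V) ∧
      ∃ W : Set M, IsOpen W ∧ (V : Set M) = ((N ⊓ Ω : AddSubgroup M) : Set M) ∩ W) ∧
    (∀ x ∈ N, ∃ L : AddSubgroup M, L ≤ N ∧ N ⊓ Ω ≤ L ∧ x ∈ L ∧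
      (∀ a : A, ∀ y ∈ L, φ a y ∈ L) ∧
      ∃ F : Finset M, (L : Set M) ⊆ ↑F + ((N ⊓ Ω : AddSubgroup M) : Set M)) := by
  classical
  refine ⟨?_, ?_, ?_⟩
  · have h : ((N ⊓ Ω : AddSubgroup M) : Set M) = (N : Set M) ∩ Ω := rfl
    rw [h]
    exact hΩc.inter_left hNcl
  · intro U hU
    obtain ⟨V, hVΩ, hVo, hVU, hVinv⟩ := hprof U hU
    refine ⟨N ⊓ V, inf_le_inf_left N hVΩ, fun x hx => hVU hx.2,
      fun a x hx => ⟨hNinv a x hx.1, hVinv a x hx.2⟩, V, hVo, ?_⟩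
    ext x
    simp only [AddSubgroup.coe_inf, Set.mem_inter_iff, SetLike.mem_coe,
      AddSubgroup.mem_inf]
    exact ⟨fun ⟨h1, h2⟩ => ⟨⟨h1, hVΩ h2⟩, h2⟩, fun ⟨⟨h1, _⟩, h2⟩ => ⟨h1, h2⟩⟩
  · intro x hx
    obtain ⟨L, hΩL, hxL, hLinv, F, hF⟩ := hlf x
    refine ⟨N ⊓ L, inf_le_left, fun y hy => ⟨hy.1, hΩL hy.2⟩, ⟨hx, hxL⟩,
      fun a y hy => ⟨hNinv a y hy.1, hLinv a y hy.2⟩, ?_⟩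
    set g : M → M := fun f =>
      if h : ∃ n, n ∈ N ⊓ L ∧ n - f ∈ Ω then h.choose else 0 with hg
    refine ⟨F.image g, ?_⟩
    rintro y hy
    have hyL : y ∈ L := hy.2
    have hyN : y ∈ N := hy.1
    obtain ⟨f, hfF, ω, hω, hsum⟩ := hF hyL
    have hex : ∃ n, n ∈ N ⊓ L ∧ n - f ∈ Ω := by
      refine ⟨y, hy, ?_⟩
      rw [← hsum]; simpa using hω
    have hgf : g f ∈ N ⊓ L ∧ g f - f ∈ Ω := by
      simp only [hg, dif_pos hex]
      exact hex.choose_spec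
    refine Set.mem_add.2 ⟨g f, Finset.mem_coe.2 (Finset.mem_image_of_mem g hfF),
      y - g f, ?_, by abel⟩
    have hyf : y - f ∈ Ω := by
      rw [← hsum]; simpa using hω
    have hdiff : y - g f ∈ Ω := by
      have : y - g f = (y - f) - (g f - f) := by abel
      rw [this]; exact Ω.sub_mem hyf hgf.2
    exact AddSubgroup.mem_inf.2 ⟨N.sub_mem hyN hgf.1.1, hdiff⟩
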